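/- Suppose a nonnegative sequence (Hⁿ) satisfies H^{n+1} - Hⁿ ≤ -Δt κ H^{n+1} for all n ≥ 1 with κ > 0 and 0 < Δt ≤ Δt_max. Then for all n ≥ 1, H^{n+1} ≤ H¹ e^{-β tⁿ}, where tⁿ = nΔt and β = log(1 + Δt_max κ)/Δt_max. -/

import Mathlib

/-- Discrete Gronwall lemma for implicit Euler entropy dissipation. -/
theorem discrete_gronwall_exponential (H : ℕ → ℝ) (hH : ∀ n, 0 ≤ H n)
    (κ Δt Δtmax : ℝ) (hκ : 0 < κ) (hΔt : 0 < Δt) (hΔtmax : Δt ≤ Δtmax)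
    (hdecay : ∀ n ≥ 1, H (n + 1) - H n ≤ -(Δt * κ * H (n + 1))) :
    ∀ n ≥ 1, H (n + 1) ≤ H 1 *
      Real.exp (-(Real.log (1 + Δtmax * κ) / Δtmax) * (n * Δt)) := by
  have hmax : 0 < Δtmax := lt_of_lt_of_le hΔt hΔtmax
  set c : ℝ := 1 + Δt * κ with hc
  have hc1 : 1 < c := by nlinarith
  have hc0 : 0 < c := by linarith
  -- key recursion: H (n+1) * c ≤ H n for n ≥ 1
  have hrec : ∀ n ≥ 1, H (n + 1) * c ≤ H n := by
    intro n hn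
    have := hdecay n hn
    rw [hc]
    nlinarith
  -- induction: H (n+1) * c^n ≤ H 1
  have hind : ∀ n ≥ 1, H (n + 1) * c ^ n ≤ H 1 := by
    intro n hn
    induction n with
    | zero => omega
    | succ m ih =>
      rcases Nat.eq_or_lt_of_le hn with h | h
      · obtain rfl : m = 0 := by omega
        simpa using hrec 1 le_rfl
      · have hm : m ≥ 1 := by omega
        have h1 := hrec (m + 1) (by omega)
        have h2 := ih hm
        calc H (m + 1 + 1) * c ^ (m + 1)
            = (H (m + 1 + 1) * c) * c ^ m := by ring
          _ ≤ H (m + 1) * c ^ m := by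
              exact mul_le_mul_of_nonneg_right h1 (pow_nonneg hc0.le m)
          _ ≤ H 1 := h2
  -- log comparison: (log(1+Δtmax κ)/Δtmax) * Δt ≤ log c
  have hlog : Real.log (1 + Δtmax * κ) / Δtmax * Δt ≤ Real.log c := by
    have hb := rpow_one_add_le_one_add_mul_self (s := Δtmax * κ)
      (by nlinarith) (p := Δt / Δtmax) (by positivity)
      ((div_le_one hmax).2 hΔtmax)
    have h1 : (1 + Δtmax * κ) ^ (Δt / Δtmax) ≤ c := by
      calc (1 + Δtmax * κ) ^ (Δt / Δtmax) ≤ 1 + Δt / Δtmax * (Δtmax * κ) := hb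
        _ = c := by rw [hc]; field_simp
    have h2 : Real.log ((1 + Δtmax * κ) ^ (Δt / Δtmax)) ≤ Real.log c :=
      Real.log_le_log (by positivity) h1
    rw [Real.log_rpow (by positivity)] at h2
    rw [div_mul_eq_mul_div, mul_div_assoc]
    linarith [h2]
  intro n hn
  have hHn := hH (n + 1)
  have hkey : H (n + 1) ≤ H 1 * Real.exp (-(n * Real.log c)) := by
    have : Real.exp (-(n * Real.log c)) = (c ^ n)⁻¹ := by
      rw [Real.exp_neg, Real.exp_nat_mul, Real.exp_log hc0]
    rw [this, ge_iff_le, ← mul_le_mul_iff_left₀ (pow_pos hc0 n), inv_mul_cancel_right₀ (by positivity) (H 1)] at *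
    exact hind n hn
  refine hkey.trans (mul_le_mul_of_nonneg_left (Real.exp_le_exp.2 ?_) (hH 1))
  have hn0 : (0:ℝ) ≤ (n:ℝ) := Nat.cast_nonneg n
  have := mul_le_mul_of_nonneg_left hlog hn0
  nlinarith
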